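/- The uniform measure of the set of simple d-regular bipartite graphs with anti-expansion measure at most 𝔷 satisfies π_u(R_{n,d}(𝔷)) ≥ 1 − 4nd⁷ / ((𝔷 + 2 − 2d²)(nd − 2d⁴)). -/

import Mathlib

open Finset

/-- A bipartite multigraph on `[n] ⊔ [m]` encoded by its adjacency (multiplicity) matrix. -/
def IsReg (n d : ℕ) (A : Fin n → Fin n → ℕ) : Prop :=
  (∀ i, ∑ j, A i j = d) ∧ (∀ j, ∑ i, A i j = d)

/-- A multigraph is simple if all multiplicities are at most one. -/
def IsSimpleG {n m : ℕ} (A : Fin n → Fin m → ℕ) : Prop := ∀ i j, A i j ≤ 1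

/-- The simple switching `⟨i,i',j,j'⟩`: replace the edges `(i,j)` and `(i',j')` by
`(i,j')` and `(i',j)`. -/
def switchM {n m : ℕ} (A : Fin n → Fin m → ℕ) (i i' : Fin n) (j j' : Fin m) :
    Fin n → Fin m → ℕ :=
  fun a b =>
    if a = i ∧ b = j then A a b - 1
    else if a = i' ∧ b = j' then A a b - 1
    else if a = i ∧ b = j' then A a b + 1
    else if a = i' ∧ b = j then A a b + 1
    else A a b

/-- Two multigraphs are adjacent if one is obtained from the other by a simple switching
operated on two non-incident edges. -/
def AdjacentM {n : ℕ} (A B : Fin n → Fin n → ℕ) : Prop :=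
  ∃ i i' j j', i ≠ i' ∧ j ≠ j' ∧ 0 < A i j ∧ 0 < A i' j' ∧ B = switchM A i i' j j'

/-- `Cat_{n,d}(k)`: `d`-regular bipartite multigraphs with exactly `k` multiplicity-2 edges,
no two of them incident, and no multiplicities `≥ 3`. -/
def InCat (n d k : ℕ) (A : Fin n → Fin n → ℕ) : Prop :=
  IsReg n d A ∧ (∀ i j, A i j ≤ 2) ∧
    (Finset.univ.filter fun p : Fin n × Fin n => A p.1 p.2 = 2).card = k ∧
    (∀ i j j', A i j = 2 → A i j' = 2 → j = j') ∧
    (∀ i i' j, A i j = 2 → A i' j = 2 → i = i')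

/-- The set of multiedges (multiplicity-2 edges) of a multigraph. -/
def MEs {n : ℕ} (A : Fin n → Fin n → ℕ) : Finset (Fin n × Fin n) :=
  Finset.univ.filter fun p => A p.1 p.2 = 2

/-- The data of a simple path starting at a multigraph `A ∈ Cat_{n,d}(k)`: to each
multiedge `e = (i_s, j_s)` of `A` it assigns the auxiliary edge `f e = (i'_s, j'_s)` used by
the corresponding simple switching `⟨i_s, i'_s, j_s, j'_s⟩`.  The auxiliary left (resp. right)
vertices are pairwise distinct, avoid all multiedge left (resp. right) vertices, and the
switching creates no multiple edges. -/
def SimplePathData {n : ℕ} (A : Fin n → Fin n → ℕ)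
    (f : Fin n × Fin n → Fin n × Fin n) : Prop :=
  (∀ e ∈ MEs A, 0 < A (f e).1 (f e).2 ∧ A (f e).1 e.2 = 0 ∧ A e.1 (f e).2 = 0 ∧
    ∀ e' ∈ MEs A, (f e).1 ≠ e'.1 ∧ (f e).2 ≠ e'.2) ∧
  ∀ e ∈ MEs A, ∀ e' ∈ MEs A, e ≠ e' → (f e).1 ≠ (f e').1 ∧ (f e).2 ≠ (f e').2

/-- The endpoint of the simple path with data `f` starting at `A`: each multiedge
`(i_s,j_s)` loses one parallel edge, the auxiliary edge `(i'_s,j'_s)` is removed, and the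
edges `(i_s,j'_s)` and `(i'_s,j_s)` are added. -/
def endpointM {n : ℕ} (A : Fin n → Fin n → ℕ) (f : Fin n × Fin n → Fin n × Fin n) :
    Fin n → Fin n → ℕ :=
  fun a b =>
    A a b + ((MEs A).filter fun e => (a = e.1 ∧ b = (f e).2) ∨ (a = (f e).1 ∧ b = e.2)).card
      - ((MEs A).filter fun e => (a = e.1 ∧ b = e.2) ∨ (a = (f e).1 ∧ b = (f e).2)).card

/-- The `s`-neighborhood of a multigraph: all endpoints of simple paths starting at it. -/
def SN {n : ℕ} (A : Fin n → Fin n → ℕ) : Set (Fin n → Fin n → ℕ) :=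
  {B | ∃ f, SimplePathData A f ∧ B = endpointM A f}

/-- The anti-expansion measure `Z(G)` of a simple graph. -/
def Zae {n : ℕ} (A : Fin n → Fin n → ℕ) : ℕ :=
  (Finset.univ.filter fun p : Fin n × Fin n =>
    0 < A p.1 p.2 ∧ ∃ k, k ≠ p.1 ∧ 0 < A k p.2 ∧
      2 ≤ (Finset.univ.filter fun j => 0 < A p.1 j ∧ 0 < A k j).card).card

open scoped Classical

namespace ST6

noncomputable def big (n : ℕ) : Finset (Fin n → Fin n → ℕ) :=
  (univ : Finset (Fin n → Fin n → Fin 2)).image (fun B i j => (B i j : ℕ))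

lemma mem_big {n : ℕ} {A : Fin n → Fin n → ℕ} (h : ∀ i j, A i j ≤ 1) : A ∈ big n := by
  refine Finset.mem_image.2 ⟨fun i j => ⟨A i j, lt_of_le_of_lt (h i j) (by norm_num)⟩,
    mem_univ _, ?_⟩
  funext i j; rfl

noncomputable def Om (n d : ℕ) : Finset (Fin n → Fin n → ℕ) :=
  (big n).filter fun A => IsReg n d A ∧ IsSimpleG A

lemma mem_Om {n d : ℕ} {A : Fin n → Fin n → ℕ} :
    A ∈ Om n d ↔ IsReg n d A ∧ IsSimpleG A := by
  constructor
  · intro h; exact (Finset.mem_filter.1 h).2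
  · intro h; exact Finset.mem_filter.2 ⟨mem_big h.2, h⟩

lemma pos_iff_one {n d : ℕ} {A : Fin n → Fin n → ℕ} (hA : A ∈ Om n d) {i j : Fin n} :
    0 < A i j ↔ A i j = 1 := by
  have := (mem_Om.1 hA).2 i j; omega

lemma row_card {n d : ℕ} {A : Fin n → Fin n → ℕ} (hA : A ∈ Om n d) (i : Fin n) :
    (univ.filter fun j => A i j = 1).card = d := by
  obtain ⟨⟨hr, _⟩, hs⟩ := mem_Om.1 hA
  rw [Finset.card_filter]
  rw [show ∑ j, (if A i j = 1 then 1 else 0) = ∑ j, A i j from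
    Finset.sum_congr rfl fun j _ => by have := hs i j; split_ifs <;> omega]
  exact hr i

lemma col_card {n d : ℕ} {A : Fin n → Fin n → ℕ} (hA : A ∈ Om n d) (j : Fin n) :
    (univ.filter fun i => A i j = 1).card = d := by
  obtain ⟨⟨_, hc⟩, hs⟩ := mem_Om.1 hA
  rw [Finset.card_filter]
  rw [show ∑ i, (if A i j = 1 then 1 else 0) = ∑ i, A i j from
    Finset.sum_congr rfl fun i _ => by have := hs i j; split_ifs <;> omega]
  exact hc j

lemma edges_card {n d : ℕ} {A : Fin n → Fin n → ℕ} (hA : A ∈ Om n d) :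
    (univ.filter fun p : Fin n × Fin n => A p.1 p.2 = 1).card = n * d := by
  obtain ⟨⟨hr, _⟩, hs⟩ := mem_Om.1 hA
  rw [Finset.card_filter]
  rw [show ∑ p : Fin n × Fin n, (if A p.1 p.2 = 1 then 1 else 0)
      = ∑ p : Fin n × Fin n, A p.1 p.2 from
    Finset.sum_congr rfl fun p _ => by have := hs p.1 p.2; split_ifs <;> omega]
  rw [Fintype.sum_prod_type]
  simp only [hr]
  simp [Finset.sum_const, mul_comm]


section Switch
variable {n : ℕ} (A : Fin n → Fin n → ℕ) (i i' j j' : Fin n)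

lemma sw_ij : switchM A i i' j j' i j = A i j - 1 := by simp [switchM]

lemma sw_i'j' (hii' : i' ≠ i) : switchM A i i' j j' i' j' = A i' j' - 1 := by
  simp [switchM, hii']

lemma sw_ij' (hii' : i' ≠ i) (hjj' : j' ≠ j) :
    switchM A i i' j j' i j' = A i j' + 1 := by
  simp [switchM, hjj', Ne.symm hii']

lemma sw_i'j (hii' : i' ≠ i) (hjj' : j' ≠ j) :
    switchM A i i' j j' i' j = A i' j + 1 := by
  simp [switchM, hii', Ne.symm hjj']

lemma sw_row {a b : Fin n} (ha : a ≠ i) (ha' : a ≠ i') :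
    switchM A i i' j j' a b = A a b := by simp [switchM, ha, ha']

lemma sw_col {a b : Fin n} (hb : b ≠ j) (hb' : b ≠ j') :
    switchM A i i' j j' a b = A a b := by simp [switchM, hb, hb']

variable {A i i' j j'}

lemma sw_rowsum (hii' : i' ≠ i) (hjj' : j' ≠ j) (h1 : 1 ≤ A i j) (h2 : 1 ≤ A i' j')
    (a : Fin n) : ∑ b, switchM A i i' j j' a b = ∑ b, A a b := by
  rcases eq_or_ne a i with ha | ha
  · subst ha
    have key : ∀ b, switchM A a i' j j' a b + (if b = j then 1 else 0)
        = A a b + (if b = j' then 1 else 0) := by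
      intro b
      rcases eq_or_ne b j with hb | hb
      · rw [hb, sw_ij A a i' j j', if_pos rfl, if_neg (Ne.symm hjj')]; omega
      · rcases eq_or_ne b j' with hb' | hb'
        · rw [hb', sw_ij' A a i' j j' hii' hjj', if_neg hjj', if_pos rfl]
        · rw [sw_col A a i' j j' hb hb', if_neg hb, if_neg hb']
    have hsum := Finset.sum_congr rfl (fun b (_ : b ∈ (univ : Finset (Fin n))) => key b)
    rw [Finset.sum_add_distrib, Finset.sum_add_distrib] at hsum
    simp only [Finset.sum_ite_eq' univ, mem_univ, if_true] at hsum
    omega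
  · rcases eq_or_ne a i' with ha' | ha'
    · subst ha'
      have key : ∀ b, switchM A i a j j' a b + (if b = j' then 1 else 0)
          = A a b + (if b = j then 1 else 0) := by
        intro b
        rcases eq_or_ne b j' with hb' | hb'
        · rw [hb', sw_i'j' A i a j j' hii', if_pos rfl, if_neg hjj']; omega
        · rcases eq_or_ne b j with hb | hb
          · rw [hb, sw_i'j A i a j j' hii' hjj', if_neg (Ne.symm hjj'), if_pos rfl]
          · rw [sw_col A i a j j' hb hb', if_neg hb', if_neg hb]
      have hsum := Finset.sum_congr rfl (fun b (_ : b ∈ (univ : Finset (Fin n))) => key b)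
      rw [Finset.sum_add_distrib, Finset.sum_add_distrib] at hsum
      simp only [Finset.sum_ite_eq' univ, mem_univ, if_true] at hsum
      omega
    · exact Finset.sum_congr rfl fun b _ => sw_row A i i' j j' ha ha'

lemma sw_colsum (hii' : i' ≠ i) (hjj' : j' ≠ j) (h1 : 1 ≤ A i j) (h2 : 1 ≤ A i' j')
    (b : Fin n) : ∑ a, switchM A i i' j j' a b = ∑ a, A a b := by
  rcases eq_or_ne b j with hb | hb
  · subst hb
    have key : ∀ a, switchM A i i' b j' a b + (if a = i then 1 else 0)
        = A a b + (if a = i' then 1 else 0) := by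
      intro a
      rcases eq_or_ne a i with ha | ha
      · rw [ha, sw_ij A i i' b j', if_pos rfl, if_neg (Ne.symm hii')]; omega
      · rcases eq_or_ne a i' with ha' | ha'
        · rw [ha', sw_i'j A i i' b j' hii' hjj', if_neg hii', if_pos rfl]
        · rw [sw_row A i i' b j' ha ha', if_neg ha, if_neg ha']
    have hsum := Finset.sum_congr rfl (fun a (_ : a ∈ (univ : Finset (Fin n))) => key a)
    rw [Finset.sum_add_distrib, Finset.sum_add_distrib] at hsum
    simp only [Finset.sum_ite_eq' univ, mem_univ, if_true] at hsum
    omega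
  · rcases eq_or_ne b j' with hb' | hb'
    · subst hb'
      have key : ∀ a, switchM A i i' j b a b + (if a = i' then 1 else 0)
          = A a b + (if a = i then 1 else 0) := by
        intro a
        rcases eq_or_ne a i' with ha' | ha'
        · rw [ha', sw_i'j' A i i' j b hii', if_pos rfl, if_neg hii']; omega
        · rcases eq_or_ne a i with ha | ha
          · rw [ha, sw_ij' A i i' j b hii' hjj', if_neg (Ne.symm hii'), if_pos rfl]
          · rw [sw_row A i i' j b ha ha', if_neg ha', if_neg ha]
      have hsum := Finset.sum_congr rfl (fun a (_ : a ∈ (univ : Finset (Fin n))) => key a)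
      rw [Finset.sum_add_distrib, Finset.sum_add_distrib] at hsum
      simp only [Finset.sum_ite_eq' univ, mem_univ, if_true] at hsum
      omega
    · exact Finset.sum_congr rfl fun a _ => sw_col A i i' j j' hb hb'

end Switch

section SwitchOm
variable {n d : ℕ} {A : Fin n → Fin n → ℕ} {i i' j j' : Fin n}

lemma sw_simple (hs : IsSimpleG A) (hii' : i' ≠ i) (hjj' : j' ≠ j)
    (h3 : A i j' = 0) (h4 : A i' j = 0) : IsSimpleG (switchM A i i' j j') := by
  intro a b
  rcases eq_or_ne a i with ha | ha
  · subst ha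
    rcases eq_or_ne b j with hb | hb
    · subst hb; rw [sw_ij]; have := hs a b; omega
    · rcases eq_or_ne b j' with hb' | hb'
      · subst hb'; rw [sw_ij' A a i' j b hii' hjj', h3]
      · rw [sw_col A a i' j j' hb hb']; exact hs a b
  · rcases eq_or_ne a i' with ha' | ha'
    · subst ha'
      rcases eq_or_ne b j' with hb' | hb'
      · subst hb'; rw [sw_i'j' A i a j b hii']; have := hs a b; omega
      · rcases eq_or_ne b j with hb | hb
        · subst hb; rw [sw_i'j A i a b j' hii' hjj', h4]
        · rw [sw_col A i a j j' hb hb']; exact hs a b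
    · rw [sw_row A i i' j j' ha ha']; exact hs a b

lemma sw_mem (hA : A ∈ Om n d) (hii' : i' ≠ i) (hjj' : j' ≠ j)
    (h1 : A i j = 1) (h2 : A i' j' = 1) (h3 : A i j' = 0) (h4 : A i' j = 0) :
    switchM A i i' j j' ∈ Om n d := by
  obtain ⟨⟨hr, hc⟩, hs⟩ := mem_Om.1 hA
  refine mem_Om.2 ⟨⟨fun a => ?_, fun b => ?_⟩, sw_simple hs hii' hjj' h3 h4⟩
  · rw [sw_rowsum hii' hjj' (by omega) (by omega)]; exact hr a
  · rw [sw_colsum hii' hjj' (by omega) (by omega)]; exact hc b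

lemma sw_invol (hii' : i' ≠ i) (hjj' : j' ≠ j)
    (h1 : A i j = 1) (h2 : A i' j' = 1) (h3 : A i j' = 0) (h4 : A i' j = 0) :
    switchM (switchM A i i' j j') i i' j' j = A := by
  set B := switchM A i i' j j' with hB
  funext a b
  rcases eq_or_ne a i with ha | ha
  · subst ha
    rcases eq_or_ne b j with hb | hb
    · subst hb
      rw [show switchM B a i' j' b a b = B a b + 1 from
        sw_ij' B a i' j' b hii' (Ne.symm hjj'), hB, sw_ij, h1]
    · rcases eq_or_ne b j' with hb' | hb'
      · subst hb'
        rw [show switchM B a i' b j a b = B a b - 1 from sw_ij B a i' b j,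
          hB, sw_ij' A a i' j b hii' hjj', h3]
      · rw [sw_col B a i' j' j hb' hb, hB, sw_col A a i' j j' hb hb']
  · rcases eq_or_ne a i' with ha' | ha'
    · subst ha'
      rcases eq_or_ne b j' with hb' | hb'
      · subst hb'
        rw [show switchM B i a b j a b = B a b + 1 from
          sw_i'j B i a b j hii' (Ne.symm hjj'), hB, sw_i'j' A i a j b hii', h2]
      · rcases eq_or_ne b j with hb | hb
        · subst hb
          rw [show switchM B i a j' b a b = B a b - 1 from sw_i'j' B i a j' b hii',
            hB, sw_i'j A i a b j' hii' hjj', h4]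
        · rw [sw_col B i a j' j hb' hb, hB, sw_col A i a j j' hb hb']
    · rw [sw_row B i i' j' j ha ha', hB, sw_row A i i' j j' ha ha']

end SwitchOm

lemma mem_pairset {M P : Type*} [DecidableEq (M × P)] {X : Finset M} {G : M → Finset P}
    {x : M × P} : x ∈ X.biUnion (fun A => {A} ×ˢ G A) ↔ x.1 ∈ X ∧ x.2 ∈ G x.1 := by
  simp only [Finset.mem_biUnion, Finset.mem_product, Finset.mem_singleton]
  constructor
  · rintro ⟨A, hA, rfl, h⟩; exact ⟨hA, h⟩
  · rintro ⟨h1, h2⟩; exact ⟨x.1, h1, rfl, h2⟩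

lemma card_pairset {M P : Type*} [DecidableEq M] [DecidableEq (M × P)]
    (X : Finset M) (G : M → Finset P) :
    (X.biUnion fun A => {A} ×ˢ G A).card = ∑ A ∈ X, (G A).card := by
  rw [Finset.card_biUnion]
  · exact Finset.sum_congr rfl fun A _ => by
      rw [Finset.card_product, Finset.card_singleton, one_mul]
  · intro A hA B hB hne
    rw [Function.onFun, Finset.disjoint_left]
    intro x hx hx'
    exact hne ((Finset.mem_singleton.1 (Finset.mem_product.1 hx).1).symm.trans
      (Finset.mem_singleton.1 (Finset.mem_product.1 hx').1))

noncomputable def NS (n d : ℕ) (S : Finset (Fin n × Fin n)) : ℕ :=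
  ((Om n d).filter fun A => ∀ p ∈ S, 0 < A p.1 p.2).card

lemma good_card_lower {n d : ℕ} (S : Finset (Fin n × Fin n)) (e : Fin n × Fin n)
    {A : Fin n → Fin n → ℕ} (hA : A ∈ Om n d) :
    n * d - (2 * d + 2 * d ^ 2 + S.card) ≤
      (univ.filter fun p' : Fin n × Fin n => A p'.1 p'.2 = 1 ∧ p'.1 ≠ e.1 ∧ p'.2 ≠ e.2 ∧
        A e.1 p'.2 = 0 ∧ A p'.1 e.2 = 0 ∧ p' ∉ S).card := by
  have hs := (mem_Om.1 hA).2
  set Good := univ.filter fun p' : Fin n × Fin n => A p'.1 p'.2 = 1 ∧ p'.1 ≠ e.1 ∧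
    p'.2 ≠ e.2 ∧ A e.1 p'.2 = 0 ∧ A p'.1 e.2 = 0 ∧ p' ∉ S with hGood
  set B1 := univ.filter fun p : Fin n × Fin n => p.1 = e.1 ∧ A p.1 p.2 = 1 with hB1
  set B2 := univ.filter fun p : Fin n × Fin n => p.2 = e.2 ∧ A p.1 p.2 = 1 with hB2
  set B3 := univ.filter fun p : Fin n × Fin n => A e.1 p.2 = 1 ∧ A p.1 p.2 = 1 with hB3
  set B4 := univ.filter fun p : Fin n × Fin n => A p.1 e.2 = 1 ∧ A p.1 p.2 = 1 with hB4
  have hcover : (univ.filter fun p : Fin n × Fin n => A p.1 p.2 = 1) ⊆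
      Good ∪ B1 ∪ B2 ∪ B3 ∪ B4 ∪ S := by
    intro p hp
    have hp1 : A p.1 p.2 = 1 := (Finset.mem_filter.1 hp).2
    simp only [Finset.mem_union]
    by_cases c1 : p.1 = e.1
    · exact Or.inl (Or.inl (Or.inl (Or.inl (Or.inr
        (Finset.mem_filter.2 ⟨mem_univ _, c1, hp1⟩)))))
    by_cases c2 : p.2 = e.2
    · exact Or.inl (Or.inl (Or.inl (Or.inr (Finset.mem_filter.2 ⟨mem_univ _, c2, hp1⟩))))
    by_cases c3 : A e.1 p.2 = 0
    · by_cases c4 : A p.1 e.2 = 0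
      · by_cases c5 : p ∈ S
        · exact Or.inr c5
        · exact Or.inl (Or.inl (Or.inl (Or.inl (Or.inl
            (Finset.mem_filter.2 ⟨mem_univ _, hp1, c1, c2, c3, c4, c5⟩)))))
      · refine Or.inl (Or.inr (Finset.mem_filter.2 ⟨mem_univ _, ?_, hp1⟩))
        have := hs p.1 e.2; omega
    · refine Or.inl (Or.inl (Or.inr (Finset.mem_filter.2 ⟨mem_univ _, ?_, hp1⟩)))
      have := hs e.1 p.2; omega
  have hE : (univ.filter fun p : Fin n × Fin n => A p.1 p.2 = 1).card = n * d :=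
    edges_card hA
  have cB1 : B1.card = d := by
    have : B1 = {e.1} ×ˢ (univ.filter fun b => A e.1 b = 1) := by
      ext ⟨a, b⟩
      simp only [hB1, Finset.mem_filter, Finset.mem_product, Finset.mem_singleton, mem_univ,
        true_and]
      constructor
      · rintro ⟨rfl, h⟩; exact ⟨rfl, h⟩
      · rintro ⟨rfl, h⟩; exact ⟨rfl, h⟩
    rw [this, Finset.card_product, Finset.card_singleton, one_mul, row_card hA]
  have cB2 : B2.card = d := by
    have : B2 = (univ.filter fun a => A a e.2 = 1) ×ˢ {e.2} := by
      ext ⟨a, b⟩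
      simp only [hB2, Finset.mem_filter, Finset.mem_product, Finset.mem_singleton, mem_univ,
        true_and]
      constructor
      · rintro ⟨rfl, h⟩; exact ⟨h, rfl⟩
      · rintro ⟨h, rfl⟩; exact ⟨rfl, h⟩
    rw [this, Finset.card_product, Finset.card_singleton, mul_one, col_card hA]
  have cB3 : B3.card ≤ d ^ 2 := by
    have hsub : B3 ⊆ (univ.filter fun b => A e.1 b = 1).biUnion
        (fun c => (univ.filter fun a => A a c = 1) ×ˢ {c}) := by
      intro p hp
      obtain ⟨-, h1, h2⟩ := Finset.mem_filter.1 hp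
      refine Finset.mem_biUnion.2 ⟨p.2, Finset.mem_filter.2 ⟨mem_univ _, h1⟩, ?_⟩
      exact Finset.mem_product.2 ⟨Finset.mem_filter.2 ⟨mem_univ _, h2⟩,
        Finset.mem_singleton_self _⟩
    calc B3.card ≤ _ := Finset.card_le_card hsub
    _ ≤ ∑ c ∈ univ.filter fun b => A e.1 b = 1,
        ((univ.filter fun a => A a c = 1) ×ˢ ({c} : Finset (Fin n))).card :=
      Finset.card_biUnion_le
    _ = ∑ c ∈ univ.filter fun b => A e.1 b = 1, d := by
      refine Finset.sum_congr rfl fun c _ => ?_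
      rw [Finset.card_product, Finset.card_singleton, mul_one, col_card hA]
    _ = d * d := by rw [Finset.sum_const, smul_eq_mul, row_card hA]
    _ = d ^ 2 := (pow_two d).symm
  have cB4 : B4.card ≤ d ^ 2 := by
    have hsub : B4 ⊆ (univ.filter fun a => A a e.2 = 1).biUnion
        (fun r => ({r} : Finset (Fin n)) ×ˢ (univ.filter fun b => A r b = 1)) := by
      intro p hp
      obtain ⟨-, h1, h2⟩ := Finset.mem_filter.1 hp
      refine Finset.mem_biUnion.2 ⟨p.1, Finset.mem_filter.2 ⟨mem_univ _, h1⟩, ?_⟩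
      exact Finset.mem_product.2 ⟨Finset.mem_singleton_self _,
        Finset.mem_filter.2 ⟨mem_univ _, h2⟩⟩
    calc B4.card ≤ _ := Finset.card_le_card hsub
    _ ≤ ∑ r ∈ univ.filter fun a => A a e.2 = 1,
        (({r} : Finset (Fin n)) ×ˢ (univ.filter fun b => A r b = 1)).card :=
      Finset.card_biUnion_le
    _ = ∑ r ∈ univ.filter fun a => A a e.2 = 1, d := by
      refine Finset.sum_congr rfl fun r _ => ?_
      rw [Finset.card_product, Finset.card_singleton, one_mul, row_card hA]
    _ = d * d := by rw [Finset.sum_const, smul_eq_mul, col_card hA]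
    _ = d ^ 2 := (pow_two d).symm
  have hchain : n * d ≤ Good.card + B1.card + B2.card + B3.card + B4.card + S.card := by
    calc n * d = _ := hE.symm
    _ ≤ (Good ∪ B1 ∪ B2 ∪ B3 ∪ B4 ∪ S).card := Finset.card_le_card hcover
    _ ≤ (Good ∪ B1 ∪ B2 ∪ B3 ∪ B4).card + S.card := Finset.card_union_le _ _
    _ ≤ (Good ∪ B1 ∪ B2 ∪ B3).card + B4.card + S.card := by
      gcongr; exact Finset.card_union_le _ _
    _ ≤ (Good ∪ B1 ∪ B2).card + B3.card + B4.card + S.card := by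
      gcongr; exact Finset.card_union_le _ _
    _ ≤ (Good ∪ B1).card + B2.card + B3.card + B4.card + S.card := by
      gcongr; exact Finset.card_union_le _ _
    _ ≤ Good.card + B1.card + B2.card + B3.card + B4.card + S.card := by
      gcongr; exact Finset.card_union_le _ _
  rw [Nat.sub_le_iff_le_add]
  rw [cB1, cB2] at hchain
  linarith

set_option maxHeartbeats 2000000 in
lemma switch_count (n d : ℕ) (S : Finset (Fin n × Fin n)) (e : Fin n × Fin n)
    (he : e ∉ S) :
    NS n d (insert e S) * (n * d - (2 * d + 2 * d ^ 2 + S.card)) ≤ NS n d S * d ^ 2 := by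
  classical
  set X := (Om n d).filter fun A => ∀ p ∈ insert e S, 0 < A p.1 p.2 with hX
  set Y := (Om n d).filter fun A => ∀ p ∈ S, 0 < A p.1 p.2 with hY
  set Good : (Fin n → Fin n → ℕ) → Finset (Fin n × Fin n) := fun A =>
    univ.filter fun p' : Fin n × Fin n => A p'.1 p'.2 = 1 ∧ p'.1 ≠ e.1 ∧ p'.2 ≠ e.2 ∧
      A e.1 p'.2 = 0 ∧ A p'.1 e.2 = 0 ∧ p' ∉ S with hGoodDef
  set W : (Fin n → Fin n → ℕ) → Finset (Fin n × Fin n) := fun B =>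
    univ.filter fun p' : Fin n × Fin n => B p'.1 e.2 = 1 ∧ B e.1 p'.2 = 1 with hWDef
  set T := X.biUnion fun A => {A} ×ˢ Good A with hT
  set T' := Y.biUnion fun B => {B} ×ˢ W B with hT'
  set φ : (Fin n → Fin n → ℕ) × (Fin n × Fin n) → (Fin n → Fin n → ℕ) × (Fin n × Fin n) :=
    fun x => (switchM x.1 e.1 x.2.1 e.2 x.2.2, x.2) with hφ
  -- facts from membership in T
  have factsT : ∀ x ∈ T, x.1 ∈ Om n d ∧ (∀ p ∈ S, 0 < x.1 p.1 p.2) ∧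
      x.1 e.1 e.2 = 1 ∧ x.1 x.2.1 x.2.2 = 1 ∧ x.2.1 ≠ e.1 ∧ x.2.2 ≠ e.2 ∧
      x.1 e.1 x.2.2 = 0 ∧ x.1 x.2.1 e.2 = 0 ∧ x.2 ∉ S := by
    intro x hx
    obtain ⟨hxX, hxG⟩ := mem_pairset.1 hx
    obtain ⟨hOm, hall⟩ := Finset.mem_filter.1 hxX
    obtain ⟨-, h2, hii', hjj', h3, h4, hpS⟩ := Finset.mem_filter.1 hxG
    exact ⟨hOm, fun p hp => hall p (Finset.mem_insert_of_mem hp),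
      (pos_iff_one hOm).1 (hall e (Finset.mem_insert_self e S)), h2, hii', hjj', h3, h4, hpS⟩
  have hmaps : ∀ x ∈ T, φ x ∈ T' := by
    intro x hx
    simp only [hφ]
    obtain ⟨hOm, hallS, h1, h2, hii', hjj', h3, h4, hpS⟩ := factsT x hx
    have hBOm : switchM x.1 e.1 x.2.1 e.2 x.2.2 ∈ Om n d :=
      sw_mem hOm hii' hjj' h1 h2 h3 h4
    refine mem_pairset.2 ⟨Finset.mem_filter.2 ⟨hBOm, ?_⟩, ?_⟩
    · -- all of S still positive
      dsimp only
      intro p hp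
      have hppos : 0 < x.1 p.1 p.2 := hallS p hp
      rcases eq_or_ne p.1 e.1 with hp1 | hp1
      · rcases eq_or_ne p.2 e.2 with hp2 | hp2
        · exfalso; apply he
          have : p = e := Prod.ext hp1 hp2
          rwa [this] at hp
        · rcases eq_or_ne p.2 x.2.2 with hp2' | hp2'
          · rw [hp1, hp2', sw_ij' x.1 e.1 x.2.1 e.2 x.2.2 hii' hjj']; omega
          · rw [hp1, sw_col x.1 e.1 x.2.1 e.2 x.2.2 hp2 hp2', ← hp1]; exact hppos
      · rcases eq_or_ne p.1 x.2.1 with hp1' | hp1'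
        · rcases eq_or_ne p.2 x.2.2 with hp2' | hp2'
          · exfalso; apply hpS
            have : p = x.2 := Prod.ext hp1' hp2'
            rwa [this] at hp
          · rcases eq_or_ne p.2 e.2 with hp2 | hp2
            · rw [hp1', hp2, sw_i'j x.1 e.1 x.2.1 e.2 x.2.2 hii' hjj']; omega
            · rw [hp1', sw_col x.1 e.1 x.2.1 e.2 x.2.2 hp2 hp2', ← hp1']; exact hppos
        · rw [sw_row x.1 e.1 x.2.1 e.2 x.2.2 hp1 hp1']; exact hppos
    · -- in W
      dsimp only
      refine Finset.mem_filter.2 ⟨mem_univ _, ?_, ?_⟩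
      · rw [sw_i'j x.1 e.1 x.2.1 e.2 x.2.2 hii' hjj', h4]
      · rw [sw_ij' x.1 e.1 x.2.1 e.2 x.2.2 hii' hjj', h3]
  have hinj : Set.InjOn φ T := by
    intro x hx y hy hxy
    simp only [hφ] at hxy
    obtain ⟨_, _, h1x, h2x, hii'x, hjj'x, h3x, h4x, _⟩ := factsT x hx
    obtain ⟨_, _, h1y, h2y, hii'y, hjj'y, h3y, h4y, _⟩ := factsT y hy
    rw [Prod.mk.injEq] at hxy
    obtain ⟨hfst, hsnd⟩ := hxy
    have hx1 : x.1 = y.1 := by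
      have ix := sw_invol hii'x hjj'x h1x h2x h3x h4x
      have iy := sw_invol hii'y hjj'y h1y h2y h3y h4y
      rw [← ix, ← iy, hfst, hsnd]
    exact Prod.ext hx1 hsnd
  have cardT : X.card * (n * d - (2 * d + 2 * d ^ 2 + S.card)) ≤ T.card := by
    rw [hT, card_pairset]
    have := Finset.card_nsmul_le_sum X (fun A => (Good A).card)
      (n * d - (2 * d + 2 * d ^ 2 + S.card)) (fun A hA => by
        exact good_card_lower S e (Finset.mem_filter.1 hA).1)
    simpa [smul_eq_mul] using this
  have cardT' : T'.card ≤ Y.card * d ^ 2 := by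
    rw [hT']
    calc (Y.biUnion fun B => {B} ×ˢ W B).card ≤ ∑ B ∈ Y, ({B} ×ˢ W B).card :=
      Finset.card_biUnion_le
    _ = ∑ B ∈ Y, (W B).card := Finset.sum_congr rfl fun B _ => by
        rw [Finset.card_product, Finset.card_singleton, one_mul]
    _ ≤ ∑ B ∈ Y, d ^ 2 := by
        refine Finset.sum_le_sum fun B hB => ?_
        have hBOm : B ∈ Om n d := (Finset.mem_filter.1 hB).1
        have : W B = (univ.filter fun a => B a e.2 = 1) ×ˢ
            (univ.filter fun b => B e.1 b = 1) := by
          ext ⟨a, b⟩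
          simp only [hWDef, Finset.mem_filter, Finset.mem_product, mem_univ, true_and]
        rw [this, Finset.card_product, col_card hBOm, row_card hBOm, pow_two]
    _ = Y.card * d ^ 2 := by rw [Finset.sum_const, smul_eq_mul]
  have := Finset.card_le_card_of_injOn φ hmaps hinj
  calc NS n d (insert e S) * (n * d - (2 * d + 2 * d ^ 2 + S.card))
      = X.card * (n * d - (2 * d + 2 * d ^ 2 + S.card)) := rfl
  _ ≤ T.card := cardT
  _ ≤ T'.card := this
  _ ≤ Y.card * d ^ 2 := cardT'
  _ = NS n d S * d ^ 2 := rfl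

lemma NS_empty (n d : ℕ) : NS n d ∅ = (Om n d).card := by
  unfold NS
  rw [Finset.filter_true_of_mem]
  intro A _ p hp
  exact absurd hp (Finset.notMem_empty p)

lemma four_chain (n d : ℕ) {a₁ a₂ b₁ b₂ : Fin n} (ha : a₁ ≠ a₂) (hb : b₁ ≠ b₂) :
    NS n d {(a₁, b₁), (a₁, b₂), (a₂, b₁), (a₂, b₂)} * (n * d - (2 * d ^ 2 + 2 * d + 3)) ^ 4
      ≤ d ^ 8 * (Om n d).card := by
  classical
  set m := n * d - (2 * d ^ 2 + 2 * d + 3) with hm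
  have step : ∀ (S : Finset (Fin n × Fin n)) (e : Fin n × Fin n), e ∉ S → S.card ≤ 3 →
      NS n d (insert e S) * m ≤ NS n d S * d ^ 2 := by
    intro S e he hc
    refine le_trans (Nat.mul_le_mul_left _ ?_) (switch_count n d S e he)
    apply Nat.sub_le_sub_left
    omega
  set S1 : Finset (Fin n × Fin n) := {(a₂, b₂)} with hS1
  set S2 : Finset (Fin n × Fin n) := {(a₂, b₁), (a₂, b₂)} with hS2
  set S3 : Finset (Fin n × Fin n) := {(a₁, b₂), (a₂, b₁), (a₂, b₂)} with hS3
  have hc1 : S1.card ≤ 3 := by simp [hS1]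
  have hc2 : S2.card ≤ 3 := le_trans (Finset.card_insert_le _ _) (by simp [hS1, hS2])
  have hc3 : S3.card ≤ 3 := by
    refine le_trans (Finset.card_insert_le _ _) ?_
    have := Finset.card_insert_le (a₂, b₁) ({(a₂, b₂)} : Finset (Fin n × Fin n))
    simp only [Finset.card_singleton] at this ⊢
    omega
  have m4 : (a₂, b₂) ∉ (∅ : Finset (Fin n × Fin n)) := Finset.notMem_empty _
  have m3 : (a₂, b₁) ∉ S1 := by simp [hS1, Prod.ext_iff, hb]
  have m2 : (a₁, b₂) ∉ S2 := by simp [hS2, Prod.ext_iff, ha]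
  have m1 : (a₁, b₁) ∉ S3 := by simp [hS3, Prod.ext_iff, ha, hb]
  have c1 := step S3 (a₁, b₁) m1 hc3
  have c2 := step S2 (a₁, b₂) m2 hc2
  have c3 := step S1 (a₂, b₁) m3 hc1
  have c4 := step ∅ (a₂, b₂) m4 (by simp)
  have hins : ({(a₁, b₁), (a₁, b₂), (a₂, b₁), (a₂, b₂)} : Finset (Fin n × Fin n))
      = insert (a₁, b₁) S3 := rfl
  have hins2 : S3 = insert (a₁, b₂) S2 := rfl
  have hins3 : S2 = insert (a₂, b₁) S1 := rfl
  have hins4 : S1 = insert (a₂, b₂) (∅ : Finset (Fin n × Fin n)) := by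
    simp [hS1]
  rw [hins]
  rw [hins2] at c1; rw [hins3] at c2; rw [hins4] at c3
  calc NS n d (insert (a₁, b₁) S3) * m ^ 4
      = NS n d (insert (a₁, b₁) S3) * m * m ^ 3 := by ring
  _ ≤ NS n d S3 * d ^ 2 * m ^ 3 := mul_le_mul_left c1 _
  _ = NS n d (insert (a₁, b₂) S2) * m * (d ^ 2 * m ^ 2) := by rw [← hins2]; ring
  _ ≤ NS n d S2 * d ^ 2 * (d ^ 2 * m ^ 2) := mul_le_mul_left c2 _
  _ = NS n d (insert (a₂, b₁) S1) * m * (d ^ 4 * m) := by rw [← hins3]; ring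
  _ ≤ NS n d S1 * d ^ 2 * (d ^ 4 * m) := mul_le_mul_left c3 _
  _ = NS n d (insert (a₂, b₂) ∅) * m * d ^ 6 := by rw [← hins4]; ring
  _ ≤ NS n d ∅ * d ^ 2 * d ^ 6 := mul_le_mul_left c4 _
  _ = d ^ 8 * (Om n d).card := by rw [NS_empty]; ring

noncomputable def PairsQ (n : ℕ) (A : Fin n → Fin n → ℕ) : ℕ :=
  (univ.filter fun q : Fin n × Fin n => q.2 ≠ q.1 ∧
    2 ≤ (univ.filter fun b => 0 < A q.1 b ∧ 0 < A q.2 b).card).card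

lemma Zae_le_pairs {n d : ℕ} {A : Fin n → Fin n → ℕ} (hA : A ∈ Om n d) :
    Zae A ≤ PairsQ n A * d := by
  classical
  have hsub : (univ.filter fun p : Fin n × Fin n =>
      0 < A p.1 p.2 ∧ ∃ k, k ≠ p.1 ∧ 0 < A k p.2 ∧
        2 ≤ (Finset.univ.filter fun j => 0 < A p.1 j ∧ 0 < A k j).card) ⊆
      (univ.filter fun q : Fin n × Fin n => q.2 ≠ q.1 ∧
        2 ≤ (univ.filter fun b => 0 < A q.1 b ∧ 0 < A q.2 b).card).biUnion
        (fun q => univ.filter fun p : Fin n × Fin n => p.1 = q.1 ∧ 0 < A q.2 p.2) := by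
    intro p hp
    obtain ⟨-, hpos, k, hk, hkpos, hcd⟩ := Finset.mem_filter.1 hp
    refine Finset.mem_biUnion.2 ⟨(p.1, k), Finset.mem_filter.2 ⟨mem_univ _, hk, hcd⟩,
      Finset.mem_filter.2 ⟨mem_univ _, rfl, hkpos⟩⟩
  calc Zae A ≤ _ := Finset.card_le_card hsub
  _ ≤ ∑ q ∈ univ.filter fun q : Fin n × Fin n => q.2 ≠ q.1 ∧
        2 ≤ (univ.filter fun b => 0 < A q.1 b ∧ 0 < A q.2 b).card,
      (univ.filter fun p : Fin n × Fin n => p.1 = q.1 ∧ 0 < A q.2 p.2).card :=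
    Finset.card_biUnion_le
  _ ≤ ∑ q ∈ univ.filter fun q : Fin n × Fin n => q.2 ≠ q.1 ∧
        2 ≤ (univ.filter fun b => 0 < A q.1 b ∧ 0 < A q.2 b).card, d := by
    refine Finset.sum_le_sum fun q _ => ?_
    have : (univ.filter fun p : Fin n × Fin n => p.1 = q.1 ∧ 0 < A q.2 p.2)
        = {q.1} ×ˢ (univ.filter fun b => A q.2 b = 1) := by
      ext ⟨a, b⟩
      simp only [Finset.mem_filter, Finset.mem_product, Finset.mem_singleton, mem_univ,
        true_and]
      constructor
      · rintro ⟨rfl, h⟩; exact ⟨rfl, (pos_iff_one hA).1 h⟩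
      · rintro ⟨rfl, h⟩; exact ⟨rfl, by omega⟩
    rw [this, Finset.card_product, Finset.card_singleton, one_mul, row_card hA]
  _ = PairsQ n A * d := by rw [Finset.sum_const, smul_eq_mul]; rfl

lemma upper_card (n : ℕ) :
    2 * (univ.filter fun r : Fin n × Fin n => r.1 < r.2).card ≤ n * n := by
  classical
  set U := univ.filter fun r : Fin n × Fin n => r.1 < r.2 with hU
  set U' := univ.filter fun r : Fin n × Fin n => r.2 < r.1 with hU'
  have hcard : U.card = U'.card := by
    refine Finset.card_bij (fun r _ => (r.2, r.1)) ?_ ?_ ?_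
    · intro r hr
      simp only [hU', Finset.mem_filter, mem_univ, true_and]
      exact (Finset.mem_filter.1 hr).2
    · intro r₁ h₁ r₂ h₂ h
      have h1 := congrArg Prod.fst h
      have h2 := congrArg Prod.snd h
      simp only at h1 h2
      exact Prod.ext h2 h1
    · intro r hr
      refine ⟨(r.2, r.1), ?_, rfl⟩
      simp only [hU, Finset.mem_filter, mem_univ, true_and]
      exact (Finset.mem_filter.1 hr).2
  have hdisj : Disjoint U U' := by
    rw [Finset.disjoint_left]
    intro r hr hr'
    exact absurd ((Finset.mem_filter.1 hr').2) (lt_asymm (Finset.mem_filter.1 hr).2)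
  have hsub : U ∪ U' ⊆ univ := Finset.subset_univ _
  have := Finset.card_le_card hsub
  rw [Finset.card_union_of_disjoint hdisj] at this
  have huniv : (univ : Finset (Fin n × Fin n)).card = n * n := by
    rw [Finset.card_univ, Fintype.card_prod, Fintype.card_fin]
  omega

lemma key_nat (n d z : ℕ) :
    2 * ((z + 1) * ((Om n d).filter fun A => z < Zae A).card
        * (n * d - (2 * d ^ 2 + 2 * d + 3)) ^ 4)
      ≤ d ^ 9 * n ^ 4 * (Om n d).card := by
  classical
  set m := n * d - (2 * d ^ 2 + 2 * d + 3) with hm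
  set N0 := (Om n d).card with hN0
  set U := (univ.filter fun r : Fin n × Fin n => r.1 < r.2).card with hUdef
  set Bset := (Om n d).filter fun A => z < Zae A with hBset
  -- Markov
  have markov : Bset.card * (z + 1) ≤ ∑ A ∈ Om n d, Zae A := by
    calc Bset.card * (z + 1) = Bset.card • (z + 1) := by rw [smul_eq_mul]
    _ ≤ ∑ A ∈ Bset, Zae A := Finset.card_nsmul_le_sum _ _ _
        (fun A hA => by have := (Finset.mem_filter.1 hA).2; omega)
    _ ≤ ∑ A ∈ Om n d, Zae A := Finset.sum_le_sum_of_subset (Finset.filter_subset _ _)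
  -- Zae bounded by pairs
  have zae_sum : ∑ A ∈ Om n d, Zae A ≤ (∑ A ∈ Om n d, PairsQ n A) * d := by
    rw [Finset.sum_mul]
    exact Finset.sum_le_sum fun A hA => Zae_le_pairs hA
  -- swap sums
  have swap : ∑ A ∈ Om n d, PairsQ n A = ∑ q : Fin n × Fin n,
      ((Om n d).filter fun A => q.2 ≠ q.1 ∧
        2 ≤ (univ.filter fun b => 0 < A q.1 b ∧ 0 < A q.2 b).card).card := by
    have : ∀ A, PairsQ n A = ∑ q : Fin n × Fin n, (if q.2 ≠ q.1 ∧
        2 ≤ (univ.filter fun b => 0 < A q.1 b ∧ 0 < A q.2 b).card then 1 else 0) := by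
      intro A; rw [PairsQ, Finset.card_filter]
    rw [Finset.sum_congr rfl fun A _ => this A, Finset.sum_comm]
    exact Finset.sum_congr rfl fun q _ => (Finset.card_filter _ _).symm
  -- per-pair bound
  have perq : ∀ q : Fin n × Fin n,
      ((Om n d).filter fun A => q.2 ≠ q.1 ∧
        2 ≤ (univ.filter fun b => 0 < A q.1 b ∧ 0 < A q.2 b).card).card * m ^ 4
      ≤ U * (d ^ 8 * N0) := by
    intro q
    by_cases hq : q.2 = q.1
    · have hempty : ((Om n d).filter fun A => q.2 ≠ q.1 ∧
          2 ≤ (univ.filter fun b => 0 < A q.1 b ∧ 0 < A q.2 b).card) = ∅ := by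
        refine Finset.filter_false_of_mem fun A _ => ?_
        rintro ⟨hne, -⟩; exact hne hq
      rw [hempty]; simp
    · have hsub : ((Om n d).filter fun A => q.2 ≠ q.1 ∧
          2 ≤ (univ.filter fun b => 0 < A q.1 b ∧ 0 < A q.2 b).card) ⊆
          (univ.filter fun r : Fin n × Fin n => r.1 < r.2).biUnion (fun r =>
            (Om n d).filter fun A =>
              ∀ p ∈ ({(q.1, r.1), (q.1, r.2), (q.2, r.1), (q.2, r.2)} :
                Finset (Fin n × Fin n)), 0 < A p.1 p.2) := by
        intro A hA
        obtain ⟨hAom, -, hcd⟩ := Finset.mem_filter.1 hA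
        obtain ⟨b₁, hb₁, b₂, hb₂, hbne⟩ := Finset.one_lt_card.1 hcd
        obtain ⟨-, hb₁1, hb₁2⟩ := Finset.mem_filter.1 hb₁
        obtain ⟨-, hb₂1, hb₂2⟩ := Finset.mem_filter.1 hb₂
        rcases lt_or_gt_of_ne hbne with hlt | hgt
        · refine Finset.mem_biUnion.2 ⟨(b₁, b₂),
            Finset.mem_filter.2 ⟨mem_univ _, hlt⟩, Finset.mem_filter.2 ⟨hAom, ?_⟩⟩
          intro p hp
          simp only [Finset.mem_insert, Finset.mem_singleton] at hp
          rcases hp with rfl | rfl | rfl | rfl <;> assumption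
        · refine Finset.mem_biUnion.2 ⟨(b₂, b₁),
            Finset.mem_filter.2 ⟨mem_univ _, hgt⟩, Finset.mem_filter.2 ⟨hAom, ?_⟩⟩
          intro p hp
          simp only [Finset.mem_insert, Finset.mem_singleton] at hp
          rcases hp with rfl | rfl | rfl | rfl <;> assumption
      calc ((Om n d).filter fun A => q.2 ≠ q.1 ∧
            2 ≤ (univ.filter fun b => 0 < A q.1 b ∧ 0 < A q.2 b).card).card * m ^ 4
          ≤ ((univ.filter fun r : Fin n × Fin n => r.1 < r.2).biUnion (fun r =>
            (Om n d).filter fun A =>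
              ∀ p ∈ ({(q.1, r.1), (q.1, r.2), (q.2, r.1), (q.2, r.2)} :
                Finset (Fin n × Fin n)), 0 < A p.1 p.2)).card * m ^ 4 :=
        mul_le_mul_left (Finset.card_le_card hsub) _
      _ ≤ (∑ r ∈ univ.filter fun r : Fin n × Fin n => r.1 < r.2,
            ((Om n d).filter fun A =>
              ∀ p ∈ ({(q.1, r.1), (q.1, r.2), (q.2, r.1), (q.2, r.2)} :
                Finset (Fin n × Fin n)), 0 < A p.1 p.2).card) * m ^ 4 :=
        mul_le_mul_left Finset.card_biUnion_le _
      _ = ∑ r ∈ univ.filter fun r : Fin n × Fin n => r.1 < r.2,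
            (((Om n d).filter fun A =>
              ∀ p ∈ ({(q.1, r.1), (q.1, r.2), (q.2, r.1), (q.2, r.2)} :
                Finset (Fin n × Fin n)), 0 < A p.1 p.2).card * m ^ 4) :=
        Finset.sum_mul _ _ _
      _ ≤ ∑ r ∈ univ.filter fun r : Fin n × Fin n => r.1 < r.2, d ^ 8 * N0 := by
        refine Finset.sum_le_sum fun r hr => ?_
        have hrlt : r.1 < r.2 := (Finset.mem_filter.1 hr).2
        exact four_chain n d (fun h => hq h.symm) (ne_of_lt hrlt)
      _ = U * (d ^ 8 * N0) := by rw [Finset.sum_const, smul_eq_mul]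
  -- assemble
  have main : Bset.card * (z + 1) * m ^ 4 ≤ d * (n * n) * (U * (d ^ 8 * N0)) := by
    calc Bset.card * (z + 1) * m ^ 4 ≤ (∑ A ∈ Om n d, Zae A) * m ^ 4 :=
      mul_le_mul_left markov _
    _ ≤ (∑ A ∈ Om n d, PairsQ n A) * d * m ^ 4 := mul_le_mul_left zae_sum _
    _ = (∑ q : Fin n × Fin n, ((Om n d).filter fun A => q.2 ≠ q.1 ∧
          2 ≤ (univ.filter fun b => 0 < A q.1 b ∧ 0 < A q.2 b).card).card) * m ^ 4 * d := by
        rw [swap]; ring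
    _ = (∑ q : Fin n × Fin n, ((Om n d).filter fun A => q.2 ≠ q.1 ∧
          2 ≤ (univ.filter fun b => 0 < A q.1 b ∧ 0 < A q.2 b).card).card * m ^ 4) * d := by
        rw [Finset.sum_mul]
    _ ≤ (∑ _q : Fin n × Fin n, U * (d ^ 8 * N0)) * d := by
        exact mul_le_mul_left (Finset.sum_le_sum fun q _ => perq q) _
    _ = d * (n * n) * (U * (d ^ 8 * N0)) := by
        rw [Finset.sum_const, smul_eq_mul, Finset.card_univ, Fintype.card_prod,
          Fintype.card_fin]
        ring
  have hU2 : 2 * U ≤ n * n := upper_card n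
  calc 2 * ((z + 1) * Bset.card * m ^ 4) = (Bset.card * (z + 1) * m ^ 4) * 2 := by ring
  _ ≤ (d * (n * n) * (U * (d ^ 8 * N0))) * 2 := mul_le_mul_left main _
  _ = d ^ 9 * (n * n) * (2 * U) * N0 := by ring
  _ ≤ d ^ 9 * (n * n) * (n * n) * N0 := by
      exact mul_le_mul_left (mul_le_mul_right hU2 _) _
  _ = d ^ 9 * n ^ 4 * N0 := by ring

lemma count_lt (n d : ℕ) (hd : d ≤ n) :
    (univ.filter fun j : Fin n => (j : ℕ) < d).card = d := by
  classical
  have : (univ.filter fun j : Fin n => (j : ℕ) < d).card = (univ : Finset (Fin d)).card := by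
    refine Finset.card_bij (fun j hj => ⟨(j : ℕ), (Finset.mem_filter.1 hj).2⟩) ?_ ?_ ?_
    · intro j hj; exact mem_univ _
    · intro j₁ h₁ j₂ h₂ h
      simp only [Fin.mk.injEq] at h
      exact Fin.ext h
    · intro b _
      refine ⟨⟨(b : ℕ), lt_of_lt_of_le b.isLt hd⟩, ?_, rfl⟩
      exact Finset.mem_filter.2 ⟨mem_univ _, b.isLt⟩
  rw [this, Finset.card_univ, Fintype.card_fin]

lemma Om_nonempty (n d : ℕ) (hn : 0 < n) (hd : d ≤ n) : (Om n d).Nonempty := by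
  classical
  haveI : NeZero n := ⟨hn.ne'⟩
  refine ⟨fun i j => if ((j - i : Fin n) : ℕ) < d then 1 else 0, mem_Om.2 ⟨⟨?_, ?_⟩, ?_⟩⟩
  · intro i
    have := Fintype.sum_equiv (Equiv.subRight i)
      (fun j : Fin n => if ((j - i : Fin n) : ℕ) < d then 1 else 0)
      (fun j : Fin n => if ((j : Fin n) : ℕ) < d then 1 else 0) (fun j => rfl)
    rw [this, ← Finset.card_filter]
    exact count_lt n d hd
  · intro j
    have := Fintype.sum_equiv (Equiv.subLeft j)
      (fun i : Fin n => if ((j - i : Fin n) : ℕ) < d then 1 else 0)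
      (fun i : Fin n => if ((i : Fin n) : ℕ) < d then 1 else 0) (fun i => rfl)
    rw [this, ← Finset.card_filter]
    exact count_lt n d hd
  · intro i j
    dsimp only
    split_ifs <;> omega

lemma Zae_eq_zero {n d : ℕ} {A : Fin n → Fin n → ℕ} (hA : A ∈ Om n d) (hd : d ≤ 1) :
    Zae A = 0 := by
  classical
  refine Finset.card_eq_zero.2 (Finset.filter_false_of_mem ?_)
  rintro p - ⟨hpos, k, hk, hkpos, -⟩
  have hc := (mem_Om.1 hA).1.2 p.2
  have hsum : A p.1 p.2 + A k p.2 ≤ ∑ i, A i p.2 := by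
    have hsub : ({p.1, k} : Finset (Fin n)) ⊆ univ := Finset.subset_univ _
    have := Finset.sum_le_sum_of_subset (f := fun i => A i p.2) hsub
    rwa [Finset.sum_pair (Ne.symm hk)] at this
  omega

end ST6

open ST6

set_option maxHeartbeats 2000000

/-- The uniform measure of the set of simple `d`-regular bipartite graphs
with anti-expansion measure at most `𝔷` satisfies
`π_u(R_{n,d}(𝔷)) ≥ 1 − 4nd⁷ / ((𝔷 + 2 − 2d²)(nd − 2d⁴))`. -/
theorem stmt6 (n d z : ℕ)
    (hpos₁ : (0 : ℝ) < (z : ℝ) + 2 - 2 * (d : ℝ) ^ 2)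
    (hpos₂ : (0 : ℝ) < (n : ℝ) * d - 2 * (d : ℝ) ^ 4) :
    1 - 4 * (n : ℝ) * (d : ℝ) ^ 7 /
        (((z : ℝ) + 2 - 2 * (d : ℝ) ^ 2) * ((n : ℝ) * d - 2 * (d : ℝ) ^ 4)) ≤
      (({A | IsReg n d A ∧ IsSimpleG A ∧ Zae A ≤ z} :
          Set (Fin n → Fin n → ℕ)).ncard : ℝ) /
      (({A | IsReg n d A ∧ IsSimpleG A} : Set (Fin n → Fin n → ℕ)).ncard : ℝ) := by
  classical
  have hd0 : 0 < d := by
    rcases Nat.eq_zero_or_pos d with rfl | h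
    · norm_num at hpos₂
    · exact h
  have hnd : 2 * d ^ 4 < n * d := by
    have h : ((2 * d ^ 4 : ℕ) : ℝ) < ((n * d : ℕ) : ℝ) := by push_cast; linarith
    exact_mod_cast h
  have h2d3 : 2 * d ^ 3 < n := by
    have e : 2 * d ^ 4 = (2 * d ^ 3) * d := by ring
    rw [e] at hnd
    exact lt_of_mul_lt_mul_right hnd (Nat.zero_le d)
  have hd3 : d ≤ d ^ 3 := Nat.le_self_pow (by norm_num) d
  have hdn : d ≤ n := by omega
  have hn0 : 0 < n := by omega
  have hsetO : ({A | IsReg n d A ∧ IsSimpleG A} : Set (Fin n → Fin n → ℕ)) = ↑(Om n d) := by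
    ext A; simp [ST6.mem_Om]
  have hsetR : ({A | IsReg n d A ∧ IsSimpleG A ∧ Zae A ≤ z} : Set (Fin n → Fin n → ℕ))
      = ↑((Om n d).filter fun A => Zae A ≤ z) := by
    ext A
    simp only [Set.mem_setOf_eq, Finset.coe_filter, ST6.mem_Om]
    tauto
  rw [hsetO, hsetR, Set.ncard_coe_finset, Set.ncard_coe_finset]
  have hNe := Om_nonempty n d hn0 hdn
  have hN0 : 0 < (Om n d).card := Finset.card_pos.2 hNe
  have hN0R : (0 : ℝ) < ((Om n d).card : ℝ) := by exact_mod_cast hN0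
  have hTnn : 0 ≤ 4 * (n : ℝ) * (d : ℝ) ^ 7 /
      (((z : ℝ) + 2 - 2 * (d : ℝ) ^ 2) * ((n : ℝ) * d - 2 * (d : ℝ) ^ 4)) :=
    div_nonneg (by positivity) (le_of_lt (mul_pos hpos₁ hpos₂))
  rcases le_or_gt d 1 with hd1 | hd2
  · have hR : (Om n d).filter (fun A => Zae A ≤ z) = Om n d :=
      Finset.filter_true_of_mem fun A hA => by
        rw [Zae_eq_zero hA hd1]; exact Nat.zero_le z
    rw [hR, div_self (ne_of_gt hN0R)]
    linarith
  · set Rc := ((Om n d).filter fun A => Zae A ≤ z).card with hRcdef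
    set Bc := ((Om n d).filter fun A => ¬ Zae A ≤ z).card with hBcdef
    have hRB : Rc + Bc = (Om n d).card :=
      Finset.card_filter_add_card_filter_not _
    have hBeq : ((Om n d).filter fun A => z < Zae A).card = Bc := by
      apply congrArg Finset.card
      apply Finset.filter_congr
      intro A _
      exact not_le.symm
    have key := key_nat n d z
    rw [hBeq] at key
    set m := n * d - (2 * d ^ 2 + 2 * d + 3) with hm
    have hub : 2 * (2 * d ^ 2 + 2 * d + 3) ≤ n * d := by
      have e1 : (2 * d ^ 3 + 1) * d ≤ n * d := Nat.mul_le_mul_right d (by omega)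
      nlinarith [hd2, e1]
    have hX : 2 * d ^ 2 + 2 * d + 3 ≤ n * d := by
      calc 2 * d ^ 2 + 2 * d + 3 ≤ 2 * (2 * d ^ 2 + 2 * d + 3) := by omega
      _ ≤ n * d := hub
    have hmR : ((m : ℕ) : ℝ) = (n : ℝ) * d - (2 * (d:ℝ) ^ 2 + 2 * d + 3) := by
      rw [hm, Nat.cast_sub hX]; push_cast; ring
    have hMhalf : (n : ℝ) * d ≤ 2 * (m : ℝ) := by
      have h := (Nat.cast_le (α := ℝ)).2 hub
      push_cast at h
      rw [hmR]; linarith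
    have hndR : (0:ℝ) < (n:ℝ) * d := by
      have h1 : (0:ℝ) < (n:ℝ) := by exact_mod_cast hn0
      have h2 : (0:ℝ) < (d:ℝ) := by exact_mod_cast hd0
      positivity
    have hMpos : (0 : ℝ) < (m : ℝ) := by linarith
    have hdR : (2 : ℝ) ≤ (d : ℝ) := by exact_mod_cast hd2
    have hnR : (1 : ℝ) ≤ (n : ℝ) := by exact_mod_cast hn0
    have keyR : 2 * ((z : ℝ) + 1) * (Bc : ℝ) * (m : ℝ) ^ 4
        ≤ (d : ℝ) ^ 9 * (n : ℝ) ^ 4 * ((Om n d).card : ℝ) := by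
      have h := (Nat.cast_le (α := ℝ)).2 key
      push_cast at h
      linarith
    have hM4 : ((n : ℝ) * d) ^ 4 ≤ 16 * (m : ℝ) ^ 4 := by
      calc ((n : ℝ) * d) ^ 4 ≤ (2 * (m : ℝ)) ^ 4 :=
        pow_le_pow_left₀ (le_of_lt hndR) hMhalf 4
      _ = 16 * (m : ℝ) ^ 4 := by ring
    have hcore : (n : ℝ) ^ 4 * (d : ℝ) ^ 3 ≤ 8 * (m : ℝ) ^ 4 := by
      have e : ((n : ℝ) * d) ^ 4 = (n : ℝ) ^ 4 * (d : ℝ) ^ 4 := by ring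
      rw [e] at hM4
      have haux : 0 ≤ (n:ℝ) ^ 4 * (d:ℝ) ^ 3 * ((d:ℝ) - 2) :=
        mul_nonneg (by positivity) (by linarith)
      nlinarith [haux, hM4]
    have hstar : (Bc : ℝ) * (((z : ℝ) + 2 - 2 * (d:ℝ) ^ 2) * ((n : ℝ) * d - 2 * (d:ℝ) ^ 4))
        ≤ 4 * (n : ℝ) * (d : ℝ) ^ 7 * ((Om n d).card : ℝ) := by
      have h1 : ((z : ℝ) + 2 - 2 * (d:ℝ) ^ 2) * ((n : ℝ) * d - 2 * (d:ℝ) ^ 4)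
          ≤ ((z : ℝ) + 1) * ((n : ℝ) * d) := by
        apply mul_le_mul ?_ ?_ (le_of_lt hpos₂) (by positivity)
        · nlinarith
        · nlinarith [pow_nonneg (show (0:ℝ) ≤ (d:ℝ) by linarith) 4]
      have hnonneg : (0 : ℝ) ≤ ((Om n d).card : ℝ) * (n : ℝ) * (d : ℝ) ^ 7 := by positivity
      have step2 : ((d : ℝ) ^ 9 * (n : ℝ) ^ 4 * ((Om n d).card : ℝ)) * ((n : ℝ) * d)
          ≤ 4 * (n : ℝ) * (d : ℝ) ^ 7 * ((Om n d).card : ℝ) * (2 * (m : ℝ) ^ 4) := by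
        have h := mul_le_mul_of_nonneg_left hcore hnonneg
        calc ((d : ℝ) ^ 9 * (n : ℝ) ^ 4 * ((Om n d).card : ℝ)) * ((n : ℝ) * d)
            = ((Om n d).card : ℝ) * (n : ℝ) * (d : ℝ) ^ 7 * ((n : ℝ) ^ 4 * (d : ℝ) ^ 3) := by
              ring
        _ ≤ ((Om n d).card : ℝ) * (n : ℝ) * (d : ℝ) ^ 7 * (8 * (m : ℝ) ^ 4) := h
        _ = 4 * (n : ℝ) * (d : ℝ) ^ 7 * ((Om n d).card : ℝ) * (2 * (m : ℝ) ^ 4) := by ring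
      have h2 : (Bc : ℝ) * ((z : ℝ) + 1) * ((n : ℝ) * d) * (2 * (m : ℝ) ^ 4)
          ≤ 4 * (n : ℝ) * (d : ℝ) ^ 7 * ((Om n d).card : ℝ) * (2 * (m : ℝ) ^ 4) := by
        calc (Bc : ℝ) * ((z : ℝ) + 1) * ((n : ℝ) * d) * (2 * (m : ℝ) ^ 4)
            = (2 * ((z : ℝ) + 1) * (Bc : ℝ) * (m : ℝ) ^ 4) * ((n : ℝ) * d) := by ring
        _ ≤ ((d : ℝ) ^ 9 * (n : ℝ) ^ 4 * ((Om n d).card : ℝ)) * ((n : ℝ) * d) :=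
          mul_le_mul_of_nonneg_right keyR (le_of_lt hndR)
        _ ≤ _ := step2
      have h2' : (Bc : ℝ) * ((z : ℝ) + 1) * ((n : ℝ) * d)
          ≤ 4 * (n : ℝ) * (d : ℝ) ^ 7 * ((Om n d).card : ℝ) :=
        le_of_mul_le_mul_right h2 (by positivity)
      calc (Bc : ℝ) * (((z : ℝ) + 2 - 2 * (d:ℝ) ^ 2) * ((n : ℝ) * d - 2 * (d:ℝ) ^ 4))
          ≤ (Bc : ℝ) * (((z : ℝ) + 1) * ((n : ℝ) * d)) :=
        mul_le_mul_of_nonneg_left h1 (Nat.cast_nonneg _)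
      _ = (Bc : ℝ) * ((z : ℝ) + 1) * ((n : ℝ) * d) := by ring
      _ ≤ _ := h2'
    have hRc : (Rc : ℝ) = ((Om n d).card : ℝ) - (Bc : ℝ) := by
      have h : (Rc : ℝ) + (Bc : ℝ) = ((Om n d).card : ℝ) := by exact_mod_cast hRB
      linarith
    have hBN : (Bc : ℝ) / ((Om n d).card : ℝ)
        ≤ 4 * (n : ℝ) * (d : ℝ) ^ 7 /
          (((z : ℝ) + 2 - 2 * (d : ℝ) ^ 2) * ((n : ℝ) * d - 2 * (d : ℝ) ^ 4)) := by
      rw [div_le_div_iff₀ hN0R (mul_pos hpos₁ hpos₂)]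
      exact hstar
    have hratio : (Rc : ℝ) / ((Om n d).card : ℝ)
        = 1 - (Bc : ℝ) / ((Om n d).card : ℝ) := by
      rw [hRc]
      field_simp
    rw [hratio]
    linarith
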